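/- Let I ⊂ S be a homogeneous ideal, R = S/I of Krull dimension d, and Θ = θ_1, …, θ_d a linear system of parameters of R. If dim_K A_k(Θ;R)_j = 0 for all k = 0, 1, …, d−1 and all j ≤ r−1, then (i) h_j(R) = dim_K (R/ΘR)_j for all j ≤ r, and (ii) h_{r+1}(R) = dim_K (R/ΘR)_{r+1} − Σ_{k=0}^{d−1} dim_K A_k(Θ;R)_r. -/

import Mathlib

/-! Algebraic core: graded pieces of polynomial rings and their quotients, Koszul
homology (with its internal grading), graded Betti numbers, regularity, depth,
Cohen–Macaulayness, and h-vectors of standard graded algebras. -/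

namespace SerrePaper

open scoped Classical
open MvPolynomial

variable (K : Type) [Field K]

/-- The degree-`j` piece of the standard graded polynomial ring `K[x_v : v ∈ σ]`. -/
noncomputable def polyDeg (σ : Type) (j : ℤ) : Submodule K (MvPolynomial σ K) :=
  if 0 ≤ j then MvPolynomial.homogeneousSubmodule σ K j.toNat else ⊥

/-- A homogeneous ideal of the polynomial ring. -/
def IsHomogIdeal {σ : Type} (I : Ideal (MvPolynomial σ K)) : Prop :=
  ∀ p ∈ I, ∀ c : ℕ, MvPolynomial.homogeneousComponent c p ∈ I

/-- The degree-`j` piece of a quotient `S/I` of the polynomial ring `S`. -/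
noncomputable def quotDeg {σ : Type} (I : Ideal (MvPolynomial σ K)) (j : ℤ) :
    Submodule K (MvPolynomial σ K ⧸ I) :=
  Submodule.map (Ideal.Quotient.mkₐ K I).toLinearMap (polyDeg K σ j)

/-- The Hilbert function `q ↦ dim_K (S/I)_q` of `S/I`. -/
noncomputable def hilbQ {σ : Type} (I : Ideal (MvPolynomial σ K)) (q : ℕ) : ℕ :=
  Module.finrank K (quotDeg K I q)

/-- The `h`-vector of `R = S/I` (of Krull dimension `d`):  `h_k(R)` is the coefficient
of `λ^k` in `F(R,λ)·(1-λ)^d`, where `F(R,λ)` is the Hilbert series; this is the vector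
`(h_0, …, h_s)` with `F(R,λ) = (h_0 + h_1 λ + ⋯ + h_s λ^s)/(1-λ)^d` (and `h_k = 0` for
`k > s`). -/
noncomputable def hQ {σ : Type} (I : Ideal (MvPolynomial σ K)) (d : ℕ) (k : ℕ) : ℤ :=
  ∑ j ∈ Finset.range (k + 1), (-1) ^ j * (d.choose j : ℤ) * (hilbQ K I (k - j) : ℤ)

section Koszul

variable {σ : Type} {τ : Type} [Fintype τ] [LinearOrder τ]
variable {M : Type} [AddCommGroup M] [Module (MvPolynomial σ K) M]

/-- The total Koszul chain space of `M` with respect to a sequence indexed by `τ`: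
functions from subsets of `τ` to `M`; the homological degree-`i` part consists of the
functions supported on subsets of cardinality `i`. -/
abbrev KCh (τ : Type) (M : Type) : Type := Finset τ → M

/-- The Koszul differential with respect to the sequence `y`. -/
noncomputable def kosd (y : τ → MvPolynomial σ K) :
    KCh τ M →ₗ[MvPolynomial σ K] KCh τ M where
  toFun f t := ∑ v : τ, if v ∈ t then 0 else
      ((-1 : ℤ) ^ (t.filter (fun u => u < v)).card) • (y v • f (insert v t))
  map_add' f g := by
    funext t
    simp only [Pi.add_apply]
    rw [← Finset.sum_add_distrib]
    refine Finset.sum_congr rfl fun v _ => ?_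
    by_cases h : v ∈ t
    · simp [h]
    · simp only [if_neg h, Pi.add_apply, smul_add]
  map_smul' r f := by
    funext t
    simp only [Pi.smul_apply, RingHom.id_apply]
    rw [Finset.smul_sum]
    refine Finset.sum_congr rfl fun v _ => ?_
    by_cases h : v ∈ t
    · simp [h]
    · simp only [if_neg h, Pi.smul_apply]
      rw [smul_comm (y v) r (f (insert v t)), smul_comm]

/-- The homological degree-`i` part of the Koszul chain space. -/
def suppOn (i : ℕ) : Submodule (MvPolynomial σ K) (KCh τ M) where
  carrier := {f | ∀ t : Finset τ, t.card ≠ i → f t = 0}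
  add_mem' := by
    intro a b ha hb t ht
    rw [Pi.add_apply, ha t ht, hb t ht, add_zero]
  zero_mem' := fun t _ => rfl
  smul_mem' := by
    intro r f hf t ht
    rw [Pi.smul_apply, hf t ht, smul_zero]

/-- Koszul cycles in homological degree `i`. -/
noncomputable def zFull (y : τ → MvPolynomial σ K) (i : ℕ) :
    Submodule (MvPolynomial σ K) (KCh τ M) :=
  suppOn K i ⊓ LinearMap.ker (kosd K y)

/-- Koszul boundaries in homological degree `i`. -/
noncomputable def bFull (y : τ → MvPolynomial σ K) (i : ℕ) :
    Submodule (MvPolynomial σ K) (KCh τ M) :=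
  Submodule.map (kosd K y) (suppOn K (i + 1))

/-- The `i`-th Koszul homology `H_i(y; M)` of `M` with respect to `y`, as a module
over the polynomial ring. -/
abbrev KosHomology (y : τ → MvPolynomial σ K) (i : ℕ) : Type :=
  ↥(zFull K (M := M) y i) ⧸
    Submodule.comap (zFull K (M := M) y i).subtype (bFull K (M := M) y i)

/-- `H_i(y;M) = 0`. -/
def kosHomologyZero (y : τ → MvPolynomial σ K) (i : ℕ) : Prop :=
  zFull K (M := M) y i ≤ bFull K (M := M) y i

variable [Module K M] [IsScalarTower K (MvPolynomial σ K) M]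

/-- The internal degree-`j`, homological degree-`i` part of the Koszul chain space of a
graded module with grading `ℳ` (a basis element `e_t`, `|t| = i`, has degree `i`). -/
def kosDeg (ℳ : ℤ → Submodule K M) (i : ℕ) (j : ℤ) : Submodule K (KCh τ M) where
  carrier := {f | ∀ t : Finset τ,
      (t.card = i → f t ∈ ℳ (j - i)) ∧ (t.card ≠ i → f t = 0)}
  add_mem' := by
    intro a b ha hb t
    refine ⟨fun ht => ?_, fun ht => ?_⟩
    · exact Submodule.add_mem _ ((ha t).1 ht) ((hb t).1 ht)
    · rw [Pi.add_apply, (ha t).2 ht, (hb t).2 ht, add_zero]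
  zero_mem' := fun t => ⟨fun _ => Submodule.zero_mem _, fun _ => rfl⟩
  smul_mem' := by
    intro c f hf t
    refine ⟨fun ht => Submodule.smul_mem _ c ((hf t).1 ht), fun ht => ?_⟩
    rw [Pi.smul_apply, (hf t).2 ht, smul_zero]

/-- Degree-`j` cycles of homological degree `i`. -/
noncomputable def zDeg (y : τ → MvPolynomial σ K) (ℳ : ℤ → Submodule K M)
    (i : ℕ) (j : ℤ) : Submodule K (KCh τ M) :=
  kosDeg K ℳ i j ⊓ (LinearMap.ker (kosd K y)).restrictScalars K

/-- Vanishing of the degree-`j` part of `H_i(y;M)`: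
every degree-`j` cycle is a boundary. -/
def kosPieceZero (y : τ → MvPolynomial σ K) (ℳ : ℤ → Submodule K M)
    (i : ℕ) (j : ℤ) : Prop :=
  zDeg K y ℳ i j ≤ (bFull K (M := M) y i).restrictScalars K

/-- `dim_K H_i(y;M)_j`, the dimension of the degree-`j` part of `H_i(y;M)`. -/
noncomputable def kosHdim (y : τ → MvPolynomial σ K) (ℳ : ℤ → Submodule K M)
    (i : ℕ) (j : ℤ) : ℕ :=
  Module.finrank K
    (↥(zDeg K y ℳ i j) ⧸
      Submodule.comap (zDeg K y ℳ i j).subtype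
        ((bFull K (M := M) y i).restrictScalars K))

end Koszul

section Graded

variable (σ : Type) [Fintype σ] [LinearOrder σ]
variable {M : Type} [AddCommGroup M] [Module (MvPolynomial σ K) M]
variable [Module K M] [IsScalarTower K (MvPolynomial σ K) M]

/-- `ℳ` is a grading of the `S`-module `M` making it a graded `S`-module. -/
def IsGrading (ℳ : ℤ → Submodule K M) : Prop :=
  DirectSum.IsInternal ℳ ∧
    ∀ (c : ℕ) (p : MvPolynomial σ K), p ∈ MvPolynomial.homogeneousSubmodule σ K c →
      ∀ (j : ℤ), ∀ x ∈ ℳ j, p • x ∈ ℳ (j + c)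

/-- The sequence of all the variables of the polynomial ring. -/
noncomputable def xSeq (σ : Type) : σ → MvPolynomial σ K := fun v => MvPolynomial.X v

/-- The graded Betti number `β_{i,j}(M) = dim_K Tor_i^S(M,K)_j`, computed as the
dimension of the degree-`j` piece of the Koszul homology `H_i(x_1,…,x_n; M)`. -/
noncomputable def betti (ℳ : ℤ → Submodule K M) (i : ℕ) (j : ℤ) : ℕ :=
  kosHdim K (xSeq K σ) ℳ i j

/-- `β_{i,j}(M) = 0`, i.e. the degree-`j` piece of `H_i(x_1,…,x_n;M)` vanishes. -/
def bettiZero (ℳ : ℤ → Submodule K M) (i : ℕ) (j : ℤ) : Prop :=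
  kosPieceZero K (xSeq K σ) ℳ i j

/-- `reg M ≤ c` for the Castelnuovo–Mumford regularity:
`β_{i,i+j}(M) = 0` for all `i` and all `j > c`. -/
def regLE (ℳ : ℤ → Submodule K M) (c : ℤ) : Prop :=
  ∀ (i : ℕ) (j : ℤ), c < j → bettiZero K σ ℳ i ((i : ℤ) + j)

/-- The Castelnuovo–Mumford regularity
`reg M = max {j : β_{i,i+j}(M) ≠ 0 for some i}`. -/
noncomputable def regM (ℳ : ℤ → Submodule K M) : ℤ :=
  sSup {j : ℤ | ∃ i : ℕ, ¬ bettiZero K σ ℳ i ((i : ℤ) + j)}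

/-- The depth of `M` (with respect to the irrelevant maximal ideal), via the
Auslander–Buchsbaum formula: `depth M = n - max {i : H_i(x_1,…,x_n; M) ≠ 0}`. -/
noncomputable def depthKos : ℕ :=
  Fintype.card σ - sSup {i : ℕ | ¬ kosHomologyZero K (xSeq K σ) (M := M) i}

end Graded

/-- `S/I` is Cohen–Macaulay: its depth equals its Krull dimension. -/
def IsCMquot {σ : Type} [Fintype σ] [LinearOrder σ] (I : Ideal (MvPolynomial σ K)) : Prop :=
  ringKrullDim (MvPolynomial σ K ⧸ I) =
    ((depthKos K σ (M := MvPolynomial σ K ⧸ I) : ℕ∞) : WithBot ℕ∞)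

section Sequences

variable {σ : Type}
variable {M : Type} [AddCommGroup M] [Module (MvPolynomial σ K) M]
variable [Module K M] [IsScalarTower K (MvPolynomial σ K) M]

/-- The submodule `(y_1, …, y_k) M ⊆ M` (for the first `k` members of `y`). -/
noncomputable def stepSub {p : ℕ} (y : Fin p → MvPolynomial σ K) (k : ℕ) :
    Submodule (MvPolynomial σ K) M :=
  ⨆ (ℓ : Fin p) (_ : (ℓ : ℕ) < k), LinearMap.range (LinearMap.lsmul (MvPolynomial σ K) M (y ℓ))

/-- The quotient `M/(y_1,…,y_k)M`. -/
abbrev StepQuot {p : ℕ} (y : Fin p → MvPolynomial σ K) (k : ℕ) : Type :=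
  M ⧸ stepSub K (M := M) y k

/-- The degree-`j` piece of `M/(y_1,…,y_k)M` (image of the degree-`j` piece of `M`). -/
noncomputable def stepPiece {p : ℕ} (ℳ : ℤ → Submodule K M)
    (y : Fin p → MvPolynomial σ K) (k : ℕ) (j : ℤ) :
    Submodule K (StepQuot K (M := M) y k) :=
  Submodule.map ((stepSub K (M := M) y k).mkQ.restrictScalars K) (ℳ j)

/-- `A_k(y;M) = (0 :_{M/(y_1,…,y_k)M} y_{k+1})` (with `k = 0, 1, …, p-1`; here
`k : Fin p` and `y_{k+1}` is `y k` in 0-based indexing). -/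
noncomputable def aSub {p : ℕ} (y : Fin p → MvPolynomial σ K) (k : Fin p) :
    Submodule (MvPolynomial σ K) (StepQuot K (M := M) y k) :=
  LinearMap.ker (LinearMap.lsmul (MvPolynomial σ K) (StepQuot K (M := M) y k) (y k))

/-- The degree-`j` piece `A_k(y;M)_j` of `A_k(y;M)`. -/
noncomputable def aPiece {p : ℕ} (ℳ : ℤ → Submodule K M)
    (y : Fin p → MvPolynomial σ K) (k : Fin p) (j : ℤ) :
    Submodule K (StepQuot K (M := M) y k) :=
  (aSub K (M := M) y k).restrictScalars K ⊓ stepPiece K ℳ y k j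

/-- `y` is an almost regular sequence on `M`: every `A_k(y;M)` has finite length. -/
def IsAlmostRegular {p : ℕ} (y : Fin p → MvPolynomial σ K) : Prop :=
  ∀ k : Fin p, IsFiniteLength (MvPolynomial σ K) ↥(aSub K (M := M) y k)

end Sequences

/-- `Θ` is a linear system of parameters for `R = S/I` (where `d = dim R`):
`d` linear forms such that `R/ΘR` has Krull dimension `0`. -/
noncomputable def IsLSOP {σ : Type} (I : Ideal (MvPolynomial σ K)) (d : ℕ)
    (Θ : Fin d → MvPolynomial σ K) : Prop :=
  (∀ ℓ, Θ ℓ ∈ polyDeg K σ 1) ∧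
    ringKrullDim (MvPolynomial σ K ⧸ (I ⊔ Ideal.span (Set.range Θ))) = 0

/-- The Stanley–Reisner ideal of a collection `Γ` of subsets of the (finite) vertex
set `τ`: the ideal generated by the squarefree monomials `x_F = ∏_{u ∈ F} x_u` with
`F ∉ Γ`. -/
noncomputable def SRideal {τ : Type} (Γ : Set (Finset τ)) : Ideal (MvPolynomial τ K) :=
  Ideal.span {g | ∃ F : Finset τ, F ∉ Γ ∧ g = ∏ u ∈ F, MvPolynomial.X u}

/-- A monomial ideal. -/
def IsMonomialIdeal {σ : Type} (I : Ideal (MvPolynomial σ K)) : Prop :=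
  ∃ A : Set (σ →₀ ℕ), I = Ideal.span ((fun a => MvPolynomial.monomial a (1 : K)) '' A)

/-- The depth of a (Noetherian) local ring `A`:
`depth A = inf {i : Ext_A^i(A/m, A) ≠ 0}`. -/
noncomputable def depthLocal (A : Type) [CommRing A] [IsLocalRing A] : ℕ :=
  sInf {i : ℕ |
    Nontrivial (((Ext A (ModuleCat A) i).obj
      (Opposite.op (ModuleCat.of A (IsLocalRing.ResidueField A)))).obj (ModuleCat.of A A))}

/-- `R = S/I` satisfies Serre's condition `(S_r)`:
`depth R_P ≥ min (r, dim R_P)` for every homogeneous prime ideal `P ⊇ I`. -/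
def SerreQuot {σ : Type} (I : Ideal (MvPolynomial σ K)) (r : ℕ) : Prop :=
  ∀ P : Ideal (MvPolynomial σ K ⧸ I), ∀ hP : P.IsPrime,
    IsHomogIdeal K (P.comap (Ideal.Quotient.mk I)) →
      haveI := hP
      min (r : WithBot ℕ∞) (ringKrullDim (Localization.AtPrime P)) ≤
        (depthLocal (Localization.AtPrime P) : WithBot ℕ∞)


section Aux21
set_option maxHeartbeats 800000
set_option synthInstance.maxHeartbeats 200000

open Finset Module

attribute [local instance] MvPolynomial.gradedAlgebra

variable {K : Type} [Field K] {n : ℕ}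

instance polyFD (j : ℕ) : FiniteDimensional K (homogeneousSubmodule (Fin n) K j) :=
  Submodule.finiteDimensional_of_le (S₂ := restrictTotalDegree (Fin n) K j)
    (fun _ hp => (mem_restrictTotalDegree _ _ _).mpr
      (((mem_homogeneousSubmodule _ _).mp hp).totalDegree_le))

instance polyDegFD (j : ℤ) : FiniteDimensional K (polyDeg K (Fin n) j) := by
  by_cases h : 0 ≤ j
  · rw [polyDeg, if_pos h]; infer_instance
  · rw [polyDeg, if_neg h]; infer_instance

theorem hc_mul_key (θ : MvPolynomial (Fin n) K) (hθ : θ.IsHomogeneous 1)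
    (s : MvPolynomial (Fin n) K) (c : ℕ) :
    homogeneousComponent (c + 1) (θ * s) = θ * homogeneousComponent c s ∧
      homogeneousComponent 0 (θ * s) = 0 := by
  have hhom : ∀ i : ℕ, (θ * homogeneousComponent i s).IsHomogeneous (1 + i) :=
    fun i => hθ.mul (homogeneousComponent_isHomogeneous i s)
  have expand : ∀ m : ℕ, homogeneousComponent m (θ * s) =
      ∑ i ∈ range (s.totalDegree + 1),
        homogeneousComponent m (θ * homogeneousComponent i s) := by
    intro m
    conv_lhs => rw [← sum_homogeneousComponent s]
    rw [Finset.mul_sum, map_sum]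
  constructor
  · rw [expand]
    have key : ∀ i : ℕ, homogeneousComponent (c+1) (θ * homogeneousComponent i s)
        = if c = i then θ * homogeneousComponent i s else 0 := by
      intro i
      rw [homogeneousComponent_of_mem ((mem_homogeneousSubmodule _ _).mpr (hhom i))]
      congr 1
      simp [eq_iff_iff]
      omega
    simp_rw [key]
    rw [Finset.sum_ite_eq]
    split_ifs with h
    · rfl
    · rw [homogeneousComponent_eq_zero, mul_zero]
      simp only [mem_range, not_lt] at h
      omega
  · rw [expand]
    apply Finset.sum_eq_zero
    intro i _
    rw [homogeneousComponent_of_mem ((mem_homogeneousSubmodule _ _).mpr (hhom i))]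
    exact if_neg (by omega)

/-- rank-nullity for the image of a submodule. -/
theorem finrank_map_add {V W : Type} [AddCommGroup V] [Module K V] [AddCommGroup W]
    [Module K W] (f : V →ₗ[K] W) (p : Submodule K V) [FiniteDimensional K p] :
    finrank K (Submodule.map f p) + finrank K ↥(p ⊓ LinearMap.ker f) = finrank K p := by
  have h1 : Submodule.map f p = LinearMap.range (f.comp p.subtype) := by
    rw [LinearMap.range_comp, Submodule.range_subtype]
  have hc : Submodule.comap p.subtype (LinearMap.ker f)
      = Submodule.comap p.subtype (p ⊓ LinearMap.ker f) := by
    rw [Submodule.comap_inf, Submodule.comap_subtype_self, top_inf_eq]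
  have e : (Submodule.comap p.subtype (LinearMap.ker f)) ≃ₗ[K] ↥(p ⊓ LinearMap.ker f) := by
    rw [hc]
    exact Submodule.comapSubtypeEquivOfLe inf_le_left
  rw [h1, ← e.finrank_eq, ← LinearMap.ker_comp]
  exact LinearMap.finrank_range_add_finrank_ker (f.comp p.subtype)

variable (I : Ideal (MvPolynomial (Fin n) K)) {d : ℕ} (Θ : Fin d → MvPolynomial (Fin n) K)

/-- The ideal `I + (θ_1, …, θ_k)` of `S`. -/
noncomputable def Jsub (k : ℕ) : Ideal (MvPolynomial (Fin n) K) :=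
  I ⊔ ⨆ (ℓ : Fin d) (_ : (ℓ : ℕ) < k),
    LinearMap.range (LinearMap.lsmul (MvPolynomial (Fin n) K) (MvPolynomial (Fin n) K) (Θ ℓ))

theorem range_lsmul (θ : MvPolynomial (Fin n) K) :
    LinearMap.range (LinearMap.lsmul (MvPolynomial (Fin n) K) (MvPolynomial (Fin n) K) θ)
      = Ideal.span {θ} := by
  ext x
  simp only [LinearMap.mem_range, LinearMap.lsmul_apply, Ideal.mem_span_singleton]
  constructor
  · rintro ⟨y, rfl⟩; exact ⟨y, smul_eq_mul ..⟩
  · rintro ⟨c, rfl⟩; exact ⟨c, smul_eq_mul ..⟩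

theorem Jsub_zero : Jsub I Θ 0 = I := by
  simp [Jsub]

theorem Jsub_succ (k : Fin d) : Jsub I Θ ((k : ℕ) + 1) = Jsub I Θ (k : ℕ) ⊔
    LinearMap.range (LinearMap.lsmul (MvPolynomial (Fin n) K) (MvPolynomial (Fin n) K) (Θ k)) := by
  unfold Jsub
  rw [sup_assoc]
  congr 1
  have h : ∀ ℓ : Fin d, ((ℓ:ℕ) < (k:ℕ)+1) = ((ℓ:ℕ) < (k:ℕ) ∨ ℓ = k) := by
    intro ℓ
    rw [eq_iff_iff, Nat.lt_succ_iff_lt_or_eq, Fin.val_inj]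
  simp only [h, iSup_or, iSup_sup_eq, iSup_iSup_eq_left]

theorem Jsub_isHomog (hI : IsHomogIdeal K I) (hΘ : ∀ ℓ, Θ ℓ ∈ polyDeg K (Fin n) 1) (k : ℕ) :
    (Jsub I Θ k).IsHomogeneous (homogeneousSubmodule (Fin n) K) := by
  apply Ideal.IsHomogeneous.sup
  · intro i r hr
    have h1 : ((DirectSum.decompose (homogeneousSubmodule (Fin n) K) r i : _)
        : MvPolynomial (Fin n) K) = homogeneousComponent i r :=
      decomposition.decompose'_apply r i
    rw [h1]
    exact hI r hr i
  · apply Ideal.IsHomogeneous.iSup₂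
    intro ℓ _
    rw [range_lsmul]
    apply Ideal.homogeneous_span
    rintro x hx
    rw [Set.mem_singleton_iff] at hx
    subst hx
    refine ⟨1, ?_⟩
    have := hΘ ℓ
    simpa [polyDeg] using this

theorem mem_hc_of_mem_Jsub (hI : IsHomogIdeal K I) (hΘ : ∀ ℓ, Θ ℓ ∈ polyDeg K (Fin n) 1)
    {k : ℕ} {x : MvPolynomial (Fin n) K} (hx : x ∈ Jsub I Θ k) (c : ℕ) :
    homogeneousComponent c x ∈ Jsub I Θ k := by
  have := Jsub_isHomog I Θ hI hΘ k c hx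
  have h1 : ((DirectSum.decompose (homogeneousSubmodule (Fin n) K) x c : _)
      : MvPolynomial (Fin n) K) = homogeneousComponent c x :=
    decomposition.decompose'_apply x c
  rwa [h1] at this

theorem stepSub_eq_map (k : ℕ) :
    stepSub K (M := MvPolynomial (Fin n) K ⧸ I) Θ k =
      Submodule.map (Submodule.mkQ I)
        (⨆ (ℓ : Fin d) (_ : (ℓ : ℕ) < k),
          LinearMap.range (LinearMap.lsmul (MvPolynomial (Fin n) K)
            (MvPolynomial (Fin n) K) (Θ ℓ))) := by
  unfold stepSub
  rw [Submodule.map_iSup]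
  apply iSup_congr
  intro ℓ
  rw [Submodule.map_iSup]
  apply iSup_congr
  intro _
  have hcomm : (Submodule.mkQ I).comp
      (LinearMap.lsmul (MvPolynomial (Fin n) K) (MvPolynomial (Fin n) K) (Θ ℓ))
      = (LinearMap.lsmul (MvPolynomial (Fin n) K) (MvPolynomial (Fin n) K ⧸ I) (Θ ℓ)).comp
        (Submodule.mkQ I) := by
    apply LinearMap.ext
    intro x
    simp only [LinearMap.comp_apply, LinearMap.lsmul_apply, Submodule.mkQ_apply,
      Submodule.Quotient.mk_smul]
  rw [← LinearMap.range_comp, hcomm, LinearMap.range_comp, Submodule.range_mkQ,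
    ← LinearMap.range_eq_map]

theorem comap_stepSub (k : ℕ) :
    Submodule.comap (Submodule.mkQ I)
      (stepSub K (M := MvPolynomial (Fin n) K ⧸ I) Θ k) = Jsub I Θ k := by
  rw [stepSub_eq_map, Submodule.comap_map_eq, Submodule.ker_mkQ, Jsub, sup_comm]

/-- The composite `S → S/I → (S/I)/(θ_1,…,θ_k)(S/I)` as a `K`-linear map. -/
noncomputable def stepMap (k : ℕ) :
    MvPolynomial (Fin n) K →ₗ[K] StepQuot K (M := MvPolynomial (Fin n) K ⧸ I) Θ k :=
  ((stepSub K (M := MvPolynomial (Fin n) K ⧸ I) Θ k).mkQ.restrictScalars K).comp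
    (Ideal.Quotient.mkₐ K I).toLinearMap

theorem stepMap_apply (k : ℕ) (x : MvPolynomial (Fin n) K) : stepMap I Θ k x
    = (stepSub K (M := MvPolynomial (Fin n) K ⧸ I) Θ k).mkQ (Submodule.mkQ I x) := rfl

theorem ker_stepMap (k : ℕ) : LinearMap.ker (stepMap I Θ k)
    = (Jsub I Θ k).restrictScalars K := by
  ext x
  rw [LinearMap.mem_ker, stepMap_apply, Submodule.mkQ_apply, Submodule.Quotient.mk_eq_zero,
    ← Submodule.mem_comap, comap_stepSub, Submodule.restrictScalars_mem]

theorem stepPiece_eq (k : ℕ) (j : ℤ) :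
    stepPiece K (M := MvPolynomial (Fin n) K ⧸ I) (fun j' => quotDeg K I j') Θ k j
      = Submodule.map (stepMap I Θ k) (polyDeg K (Fin n) j) := by
  rw [stepPiece, quotDeg, stepMap, Submodule.map_comp]

theorem finrank_stepPiece (k : ℕ) (j : ℤ) :
    finrank K (stepPiece K (M := MvPolynomial (Fin n) K ⧸ I) (fun j' => quotDeg K I j') Θ k j)
      + finrank K ↥(polyDeg K (Fin n) j ⊓ (Jsub I Θ k).restrictScalars K)
      = finrank K (polyDeg K (Fin n) j) := by
  rw [stepPiece_eq, ← ker_stepMap I Θ k]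
  exact finrank_map_add _ _

/-- The colon subspace `{p : θ_{k+1} p ∈ I + (θ_1,…,θ_k)}`. -/
noncomputable def Csub (k : Fin d) : Submodule K (MvPolynomial (Fin n) K) :=
  Submodule.comap ((LinearMap.lsmul (MvPolynomial (Fin n) K)
      (MvPolynomial (Fin n) K) (Θ k)).restrictScalars K)
    ((Jsub I Θ (k : ℕ)).restrictScalars K)

theorem mem_Csub {k : Fin d} {p : MvPolynomial (Fin n) K} :
    p ∈ Csub I Θ k ↔ Θ k • p ∈ Jsub I Θ (k : ℕ) := Iff.rfl

theorem stepMap_smul (k : ℕ) (s x : MvPolynomial (Fin n) K) :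
    stepMap I Θ k (s • x) = s • stepMap I Θ k x := by
  rw [stepMap_apply, stepMap_apply, map_smul, map_smul]

theorem aPiece_eq (k : Fin d) (j : ℤ) :
    aPiece K (M := MvPolynomial (Fin n) K ⧸ I) (fun j' => quotDeg K I j') Θ k j
      = Submodule.map (stepMap I Θ (k : ℕ)) (polyDeg K (Fin n) j ⊓ Csub I Θ k) := by
  apply le_antisymm
  · rintro x ⟨hker, hx⟩
    rw [stepPiece_eq] at hx
    obtain ⟨p, hp, rfl⟩ := hx
    refine ⟨p, ⟨hp, ?_⟩, rfl⟩
    have h0 : Θ k • stepMap I Θ (k : ℕ) p = 0 := hker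
    have h1 : stepMap I Θ (k : ℕ) (Θ k • p) = 0 := by rw [stepMap_smul]; exact h0
    have h2 : Θ k • p ∈ LinearMap.ker (stepMap I Θ (k : ℕ)) := h1
    rw [ker_stepMap, Submodule.restrictScalars_mem] at h2
    exact (mem_Csub I Θ).mpr h2
  · rintro _ ⟨p, ⟨hp, hc⟩, rfl⟩
    refine Submodule.mem_inf.mpr ⟨?_, ?_⟩
    · show stepMap I Θ (k : ℕ) p ∈ LinearMap.ker (LinearMap.lsmul (MvPolynomial (Fin n) K) _ (Θ k))
      rw [LinearMap.mem_ker, LinearMap.lsmul_apply, ← stepMap_smul]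
      have h2 : Θ k • p ∈ LinearMap.ker (stepMap I Θ (k : ℕ)) := by
        rw [ker_stepMap, Submodule.restrictScalars_mem]
        exact (mem_Csub I Θ).mp hc
      exact h2
    · rw [stepPiece_eq]
      exact ⟨p, hp, rfl⟩

theorem Jsub_le_Csub (k : Fin d) :
    (Jsub I Θ (k : ℕ)).restrictScalars K ≤ Csub I Θ k := by
  intro x hx
  rw [Submodule.restrictScalars_mem] at hx
  exact (mem_Csub I Θ).mpr (Submodule.smul_mem _ _ hx)

theorem finrank_aPiece (k : Fin d) (j : ℤ) :
    finrank K (aPiece K (M := MvPolynomial (Fin n) K ⧸ I) (fun j' => quotDeg K I j') Θ k j)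
      + finrank K ↥(polyDeg K (Fin n) j ⊓ (Jsub I Θ (k : ℕ)).restrictScalars K)
      = finrank K ↥(polyDeg K (Fin n) j ⊓ Csub I Θ k) := by
  rw [aPiece_eq]
  haveI : FiniteDimensional K ↥(polyDeg K (Fin n) j ⊓ Csub I Θ k) :=
    Submodule.finiteDimensional_of_le inf_le_left
  have h := finrank_map_add (stepMap I Θ (k : ℕ)) (polyDeg K (Fin n) j ⊓ Csub I Θ k)
  rw [ker_stepMap] at h
  have he : polyDeg K (Fin n) j ⊓ Csub I Θ k ⊓ (Jsub I Θ (k : ℕ)).restrictScalars K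
      = polyDeg K (Fin n) j ⊓ (Jsub I Θ (k : ℕ)).restrictScalars K := by
    rw [inf_assoc, inf_eq_right.mpr (Jsub_le_Csub I Θ k)]
  rw [he] at h
  exact h

theorem polyDeg_neg {j : ℤ} (h : j < 0) : polyDeg K (Fin n) j = ⊥ := by
  rw [polyDeg, if_neg (not_le.mpr h)]

theorem mem_polyDeg_iff {j : ℤ} (hj : 0 ≤ j) (p : MvPolynomial (Fin n) K) :
    p ∈ polyDeg K (Fin n) j ↔ p.IsHomogeneous j.toNat := by
  unfold polyDeg
  rw [if_pos hj]
  exact mem_homogeneousSubmodule _ _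

theorem theta_isHomog (hΘ : ∀ ℓ, Θ ℓ ∈ polyDeg K (Fin n) 1) (k : Fin d) :
    (Θ k).IsHomogeneous 1 := by
  have := hΘ k
  rw [polyDeg, if_pos (by norm_num)] at this
  simpa using this

theorem map_lsmul_le (hΘ : ∀ ℓ, Θ ℓ ∈ polyDeg K (Fin n) 1) (k : Fin d) (j : ℤ) :
    Submodule.map ((LinearMap.lsmul (MvPolynomial (Fin n) K)
        (MvPolynomial (Fin n) K) (Θ k)).restrictScalars K) (polyDeg K (Fin n) (j-1))
      ≤ polyDeg K (Fin n) j := by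
  rcases lt_or_ge (j-1) 0 with h | h
  · rw [polyDeg_neg h, Submodule.map_bot]
    exact bot_le
  · rintro _ ⟨q, hq, rfl⟩
    have hj : 0 ≤ j := by omega
    have hq : q ∈ polyDeg K (Fin n) (j-1) := hq
    rw [mem_polyDeg_iff h] at hq
    rw [mem_polyDeg_iff hj]
    have hmul := (theta_isHomog Θ hΘ k).mul hq
    have harith : 1 + (j-1).toNat = j.toNat := by omega
    show ((Θ k) • q).IsHomogeneous j.toNat
    rw [smul_eq_mul, ← harith]
    exact hmul

theorem Jsub_le_succ (k : Fin d) : Jsub I Θ (k : ℕ) ≤ Jsub I Θ ((k : ℕ) + 1) := by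
  rw [Jsub_succ]
  exact le_sup_left

theorem inter_Jsub_succ (hI : IsHomogIdeal K I) (hΘ : ∀ ℓ, Θ ℓ ∈ polyDeg K (Fin n) 1)
    (k : Fin d) (j : ℤ) :
    polyDeg K (Fin n) j ⊓ (Jsub I Θ ((k : ℕ) + 1)).restrictScalars K =
      (polyDeg K (Fin n) j ⊓ (Jsub I Θ (k : ℕ)).restrictScalars K) ⊔
        Submodule.map ((LinearMap.lsmul (MvPolynomial (Fin n) K)
          (MvPolynomial (Fin n) K) (Θ k)).restrictScalars K) (polyDeg K (Fin n) (j-1)) := by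
  have hθh := theta_isHomog Θ hΘ k
  apply le_antisymm
  · intro p hp
    obtain ⟨hp1, hp2⟩ := Submodule.mem_inf.mp hp
    rw [Submodule.restrictScalars_mem, Jsub_succ] at hp2
    obtain ⟨y, hy, z, hz, rfl⟩ := Submodule.mem_sup.mp hp2
    obtain ⟨s, rfl⟩ := hz
    rcases lt_or_ge j 0 with hj | hj
    · rw [polyDeg_neg hj, Submodule.mem_bot] at hp1
      rw [hp1]
      exact Submodule.zero_mem _
    · have hp1' : y + (LinearMap.lsmul (MvPolynomial (Fin n) K)
          (MvPolynomial (Fin n) K) (Θ k)) s ∈ homogeneousSubmodule (Fin n) K j.toNat := by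
        rw [mem_polyDeg_iff hj] at hp1
        rw [mem_homogeneousSubmodule]
        exact hp1
      have hid : homogeneousComponent j.toNat
            (y + (LinearMap.lsmul (MvPolynomial (Fin n) K)
              (MvPolynomial (Fin n) K) (Θ k)) s)
          = y + (LinearMap.lsmul (MvPolynomial (Fin n) K)
              (MvPolynomial (Fin n) K) (Θ k)) s := by
        rw [homogeneousComponent_of_mem hp1', if_pos rfl]
      rw [map_add] at hid
      have hcy : homogeneousComponent j.toNat y ∈ Jsub I Θ (k : ℕ) :=
        mem_hc_of_mem_Jsub I Θ hI hΘ hy j.toNat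
      have hcy' : homogeneousComponent j.toNat y ∈ polyDeg K (Fin n) j := by
        rw [mem_polyDeg_iff hj]
        exact homogeneousComponent_isHomogeneous _ _
      have hsm : (LinearMap.lsmul (MvPolynomial (Fin n) K)
          (MvPolynomial (Fin n) K) (Θ k)) s = Θ k * s := smul_eq_mul ..
      rcases Nat.eq_zero_or_pos j.toNat with hc0 | hcpos
      · rw [← hid, hc0, hsm, (hc_mul_key (Θ k) hθh s 0).2, add_zero]
        exact Submodule.mem_sup_left (Submodule.mem_inf.mpr ⟨hc0 ▸ hcy', by
          rw [Submodule.restrictScalars_mem]; exact hc0 ▸ hcy⟩)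
      · obtain ⟨c', hc'⟩ : ∃ c', j.toNat = c' + 1 := ⟨j.toNat - 1, by omega⟩
        rw [← hid, hc', hsm, (hc_mul_key (Θ k) hθh s c').1]
        apply Submodule.add_mem
        · exact Submodule.mem_sup_left (Submodule.mem_inf.mpr ⟨hc' ▸ hcy', by
            rw [Submodule.restrictScalars_mem]; exact hc' ▸ hcy⟩)
        · apply Submodule.mem_sup_right
          refine ⟨homogeneousComponent c' s, ?_, ?_⟩
          · show homogeneousComponent c' s ∈ polyDeg K (Fin n) (j - 1)
            rw [mem_polyDeg_iff (by omega : (0:ℤ) ≤ j - 1)]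
            have : (j-1).toNat = c' := by omega
            rw [this]
            exact homogeneousComponent_isHomogeneous _ _
          · show (Θ k) • homogeneousComponent c' s = _
            rw [smul_eq_mul]
  · apply sup_le
    · exact inf_le_inf_left _ (fun x hx => by
        rw [Submodule.restrictScalars_mem] at hx ⊢
        exact Jsub_le_succ I Θ k hx)
    · intro x hx
      refine Submodule.mem_inf.mpr ⟨map_lsmul_le Θ hΘ k j hx, ?_⟩
      obtain ⟨q, _, rfl⟩ := hx
      rw [Submodule.restrictScalars_mem, Jsub_succ]
      exact Submodule.mem_sup_right ⟨q, rfl⟩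

theorem D_succ (hI : IsHomogIdeal K I) (hΘ : ∀ ℓ, Θ ℓ ∈ polyDeg K (Fin n) 1)
    (k : Fin d) (j : ℤ) :
    finrank K ↥(polyDeg K (Fin n) j ⊓ (Jsub I Θ ((k : ℕ) + 1)).restrictScalars K)
      + finrank K ↥(polyDeg K (Fin n) (j-1) ⊓ Csub I Θ k)
    = finrank K ↥(polyDeg K (Fin n) j ⊓ (Jsub I Θ (k : ℕ)).restrictScalars K)
      + finrank K (polyDeg K (Fin n) (j-1)) := by
  set A := polyDeg K (Fin n) j ⊓ (Jsub I Θ (k : ℕ)).restrictScalars K with hA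
  set B := Submodule.map ((LinearMap.lsmul (MvPolynomial (Fin n) K)
      (MvPolynomial (Fin n) K) (Θ k)).restrictScalars K) (polyDeg K (Fin n) (j-1)) with hB
  haveI : FiniteDimensional K A := Submodule.finiteDimensional_of_le inf_le_left
  have h1 := Submodule.finrank_sup_add_finrank_inf_eq A B
  have hBle : B ≤ polyDeg K (Fin n) j := map_lsmul_le Θ hΘ k j
  have hAB : A ⊓ B = B ⊓ (Jsub I Θ (k : ℕ)).restrictScalars K := by
    ext x
    simp only [Submodule.mem_inf, hA]
    constructor
    · rintro ⟨⟨_, h2⟩, h3⟩; exact ⟨h3, h2⟩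
    · rintro ⟨h3, h2⟩; exact ⟨⟨hBle h3, h2⟩, h3⟩
  have h2 := finrank_map_add (stepMap I Θ (k : ℕ)) B
  rw [ker_stepMap] at h2
  have h3 : Submodule.map (stepMap I Θ (k : ℕ)) B
      = Submodule.map ((stepMap I Θ (k : ℕ)).comp ((LinearMap.lsmul (MvPolynomial (Fin n) K)
          (MvPolynomial (Fin n) K) (Θ k)).restrictScalars K)) (polyDeg K (Fin n) (j-1)) :=
    (Submodule.map_comp _ _ _).symm
  have h4 : LinearMap.ker ((stepMap I Θ (k : ℕ)).comp ((LinearMap.lsmul (MvPolynomial (Fin n) K)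
      (MvPolynomial (Fin n) K) (Θ k)).restrictScalars K)) = Csub I Θ k := by
    rw [LinearMap.ker_comp, ker_stepMap]
    rfl
  have h5 := finrank_map_add ((stepMap I Θ (k : ℕ)).comp ((LinearMap.lsmul (MvPolynomial (Fin n) K)
      (MvPolynomial (Fin n) K) (Θ k)).restrictScalars K)) (polyDeg K (Fin n) (j-1))
  rw [h4, ← h3] at h5
  have h6 : polyDeg K (Fin n) j ⊓ (Jsub I Θ ((k : ℕ) + 1)).restrictScalars K = A ⊔ B :=
    inter_Jsub_succ I Θ hI hΘ k j
  rw [← h6] at h1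
  rw [hAB] at h1
  omega

theorem hilbQ_rel (q : ℕ) :
    hilbQ K I q + finrank K ↥(polyDeg K (Fin n) (q : ℤ) ⊓ (Jsub I Θ 0).restrictScalars K)
      = finrank K (polyDeg K (Fin n) (q : ℤ)) := by
  rw [Jsub_zero]
  have hker : LinearMap.ker (Ideal.Quotient.mkₐ K I).toLinearMap = I.restrictScalars K := by
    ext x
    simp [LinearMap.mem_ker, Ideal.Quotient.eq_zero_iff_mem]
  have h := finrank_map_add (Ideal.Quotient.mkₐ K I).toLinearMap (polyDeg K (Fin n) (q : ℤ))
  rw [hker] at h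
  rw [hilbQ, quotDeg]
  exact h

/-- `dim_K (S/(I+(θ_1,…,θ_k)))_j` as an integer. -/
noncomputable def fdZ (k : ℕ) (j : ℤ) : ℤ :=
  (finrank K (polyDeg K (Fin n) j) : ℤ)
    - (finrank K ↥(polyDeg K (Fin n) j ⊓ (Jsub I Θ k).restrictScalars K) : ℤ)

theorem fdZ_neg (k : ℕ) {j : ℤ} (hj : j < 0) : fdZ I Θ k j = 0 := by
  rw [fdZ, polyDeg_neg hj, bot_inf_eq]
  simp

theorem fdZ_succ (hI : IsHomogIdeal K I) (hΘ : ∀ ℓ, Θ ℓ ∈ polyDeg K (Fin n) 1)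
    (k : Fin d) (j : ℤ) :
    fdZ I Θ ((k : ℕ) + 1) j = fdZ I Θ (k : ℕ) j - fdZ I Θ (k : ℕ) (j - 1)
      + (finrank K (aPiece K (M := MvPolynomial (Fin n) K ⧸ I)
          (fun j' => quotDeg K I j') Θ k (j - 1)) : ℤ) := by
  have h1 := D_succ I Θ hI hΘ k j
  have h2 := finrank_aPiece I Θ k (j - 1)
  rw [fdZ, fdZ, fdZ]
  omega

theorem fdZ_stepPiece (k : ℕ) (j : ℤ) :
    (finrank K (stepPiece K (M := MvPolynomial (Fin n) K ⧸ I)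
      (fun j' => quotDeg K I j') Θ k j) : ℤ) = fdZ I Θ k j := by
  have h := finrank_stepPiece I Θ k j
  rw [fdZ]
  omega

theorem fdZ_zero_hilb (q : ℕ) : fdZ I Θ 0 (q : ℤ) = (hilbQ K I q : ℤ) := by
  have h := hilbQ_rel I Θ q
  rw [fdZ]
  omega

/-- `dim_K A_k(Θ;R)_j`, extended by zero beyond `Fin d`. -/
noncomputable def aPk (j : ℤ) (k : ℕ) : ℤ :=
  if h : k < d then
    (finrank K (aPiece K (M := MvPolynomial (Fin n) K ⧸ I)
      (fun j' => quotDeg K I j') Θ ⟨k, h⟩ j) : ℤ)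
  else 0

theorem hockey (D i : ℕ) : ∑ k ∈ range D, ((k.choose i : ℤ)) = (D.choose (i+1) : ℤ) := by
  induction D with
  | zero => simp
  | succ D ih =>
    rw [Finset.sum_range_succ, ih, Nat.choose_succ_succ']
    push_cast
    ring

theorem binom_step (g : ℕ → ℤ) (k j' : ℕ) :
    ∑ i ∈ range (j'+1+1), (-1)^i * (k.choose i : ℤ) * g (j'+1-i)
      - ∑ i ∈ range (j'+1), (-1)^i * (k.choose i : ℤ) * g (j'-i)
    = ∑ i ∈ range (j'+1+1), (-1)^i * ((k+1).choose i : ℤ) * g (j'+1-i) := by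
  rw [Finset.sum_range_succ' (fun i => (-1)^i * (((k+1).choose i : ℕ) : ℤ) * g (j'+1-i)),
    Finset.sum_range_succ' (fun i => (-1)^i * ((k.choose i : ℕ) : ℤ) * g (j'+1-i))]
  have key : ∀ i ∈ range (j'+1), (-1:ℤ)^(i+1) * (((k+1).choose (i+1) : ℕ) : ℤ) * g (j'+1-(i+1))
      = (-1)^(i+1) * ((k.choose (i+1) : ℕ) : ℤ) * g (j'+1-(i+1))
        - (-1)^i * ((k.choose i : ℕ) : ℤ) * g (j'-i) := by
    intro i _
    have hsub : j'+1-(i+1) = j'-i := by omega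
    rw [hsub, Nat.choose_succ_succ']
    push_cast
    ring
  rw [Finset.sum_congr rfl key, Finset.sum_sub_distrib]
  simp only [Nat.choose_zero_right, Nat.cast_one]
  ring

theorem final_binom (g : ℕ → ℤ) (D r : ℕ) :
    ∑ i ∈ range (r+1+1), (-1)^i * (D.choose i : ℤ) * g (r+1-i)
      = g (r+1) - ∑ k ∈ range D, ∑ i ∈ range (r+1), (-1)^i * (k.choose i : ℤ) * g (r-i) := by
  have h1 : ∑ k ∈ range D, ∑ i ∈ range (r+1), (-1:ℤ)^i * (k.choose i : ℤ) * g (r-i)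
      = ∑ i ∈ range (r+1), (-1:ℤ)^i * (D.choose (i+1) : ℤ) * g (r-i) := by
    rw [Finset.sum_comm]
    refine Finset.sum_congr rfl fun i _ => ?_
    rw [← hockey D i, Finset.mul_sum, Finset.sum_mul]
  rw [h1, Finset.sum_range_succ' (fun i => (-1:ℤ)^i * ((D.choose i : ℕ) : ℤ) * g (r+1-i))]
  have key : ∀ i ∈ range (r+1), (-1:ℤ)^(i+1) * ((D.choose (i+1) : ℕ) : ℤ) * g (r+1-(i+1))
      = -((-1)^i * ((D.choose (i+1) : ℕ) : ℤ) * g (r-i)) := by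
    intro i _
    have hsub : r+1-(i+1) = r-i := by omega
    rw [hsub]
    ring
  rw [Finset.sum_congr rfl key, Finset.sum_neg_distrib]
  simp only [Nat.choose_zero_right, Nat.cast_one, pow_zero, one_mul, Nat.sub_zero]
  ring

theorem claimA (hI : IsHomogIdeal K I) (hΘ : ∀ ℓ, Θ ℓ ∈ polyDeg K (Fin n) 1) (r : ℕ)
    (hA0 : ∀ (k : Fin d) (j : ℤ), j ≤ (r : ℤ) - 1 →
      aPiece K (M := MvPolynomial (Fin n) K ⧸ I) (fun j' => quotDeg K I j') Θ k j = ⊥) :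
    ∀ k, k ≤ d → ∀ j : ℕ, j ≤ r → fdZ I Θ k (j : ℤ)
      = ∑ i ∈ range (j+1), (-1)^i * (k.choose i : ℤ) * fdZ I Θ 0 ((j-i : ℕ) : ℤ) := by
  intro k
  induction k with
  | zero =>
    intro _ j _
    rw [Finset.sum_eq_single 0]
    · simp
    · intro i _ hi
      obtain ⟨i', rfl⟩ : ∃ i', i = i' + 1 := ⟨i - 1, by omega⟩
      simp
    · intro h
      exact absurd (Finset.mem_range.mpr (by omega)) h
  | succ k ih =>
    intro hk j hj
    have hkd : k < d := by omega
    have hrec := fdZ_succ I Θ hI hΘ ⟨k, hkd⟩ (j : ℤ)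
    rw [hA0 ⟨k, hkd⟩ ((j : ℤ) - 1) (by omega)] at hrec
    rw [finrank_bot, Nat.cast_zero, add_zero] at hrec
    simp only [Fin.val_mk] at hrec
    rcases Nat.eq_zero_or_pos j with rfl | hjpos
    · rw [Nat.cast_zero] at hrec ⊢
      rw [hrec, fdZ_neg I Θ k (j := (0:ℤ) - 1) (by norm_num), sub_zero]
      have hih := ih (by omega) 0 (by omega)
      rw [Nat.cast_zero] at hih
      rw [hih]
      simp
    · obtain ⟨j', rfl⟩ : ∃ j'', j = j'' + 1 := ⟨j - 1, by omega⟩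
      have h1 : ((j' + 1 : ℕ) : ℤ) - 1 = ((j' : ℕ) : ℤ) := by push_cast; ring
      rw [h1] at hrec
      rw [hrec, ih (by omega) (j'+1) (by omega), ih (by omega) j' (by omega)]
      exact binom_step (fun m => fdZ I Θ 0 (m : ℤ)) k j'

theorem claimB (hI : IsHomogIdeal K I) (hΘ : ∀ ℓ, Θ ℓ ∈ polyDeg K (Fin n) 1) (r : ℕ) :
    ∀ m, m ≤ d → fdZ I Θ m ((r : ℤ) + 1)
      = fdZ I Θ 0 ((r : ℤ) + 1) + ∑ k ∈ range m, (aPk I Θ (r : ℤ) k - fdZ I Θ k (r : ℤ)) := by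
  intro m
  induction m with
  | zero => intro _; simp
  | succ m ih =>
    intro hm
    have hmd : m < d := by omega
    have hrec := fdZ_succ I Θ hI hΘ ⟨m, hmd⟩ ((r : ℤ) + 1)
    simp only [Fin.val_mk] at hrec
    rw [show (r : ℤ) + 1 - 1 = (r : ℤ) by ring] at hrec
    rw [Finset.sum_range_succ, ← add_assoc, ← ih (by omega), hrec, aPk, dif_pos hmd]
    ring

end Aux21

/-- **Lemma 2.1.**  Let `I ⊂ S` be a homogeneous ideal, `R = S/I` of Krull dimension
`d`, and `Θ = θ_1, …, θ_d` a linear system of parameters of `R`.  If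
`dim_K A_k(Θ;R)_j = 0` for all `k = 0, …, d-1` and all `j ≤ r-1`, then
(i) `h_j(R) = dim_K (R/ΘR)_j` for all `j ≤ r`, and
(ii) `h_{r+1}(R) = dim_K (R/ΘR)_{r+1} - ∑_{k=0}^{d-1} dim_K A_k(Θ;R)_r`. -/
theorem hQ_eq_of_lsop {n : ℕ} (K : Type) [Field K] [Infinite K] (r : ℕ)
    (I : Ideal (MvPolynomial (Fin n) K)) (hI : IsHomogIdeal K I)
    (d : ℕ) (hd : ringKrullDim (MvPolynomial (Fin n) K ⧸ I) = (d : WithBot ℕ∞))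
    (Θ : Fin d → MvPolynomial (Fin n) K) (hΘ : IsLSOP K I d Θ)
    (hA : ∀ (k : Fin d) (j : ℤ), j ≤ (r : ℤ) - 1 →
      aPiece K (M := MvPolynomial (Fin n) K ⧸ I) (fun j' => quotDeg K I j') Θ k j = ⊥) :
    (∀ j : ℕ, j ≤ r →
      hQ K I d j =
        (Module.finrank K
          (stepPiece K (M := MvPolynomial (Fin n) K ⧸ I)
            (fun j' => quotDeg K I j') Θ d (j : ℤ)) : ℤ)) ∧
    hQ K I d (r + 1) =
      (Module.finrank K
        (stepPiece K (M := MvPolynomial (Fin n) K ⧸ I)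
          (fun j' => quotDeg K I j') Θ d ((r : ℤ) + 1)) : ℤ) -
      ∑ k : Fin d,
        (Module.finrank K
          (aPiece K (M := MvPolynomial (Fin n) K ⧸ I)
            (fun j' => quotDeg K I j') Θ k (r : ℤ)) : ℤ) := by
  obtain ⟨hΘ1, -⟩ := hΘ
  constructor
  · intro j hj
    have h0 : hQ K I d j = ∑ i ∈ Finset.range (j+1), (-1:ℤ)^i * (d.choose i : ℤ)
        * fdZ I Θ 0 ((j - i : ℕ) : ℤ) := by
      rw [hQ]
      refine Finset.sum_congr rfl fun i _ => ?_
      rw [fdZ_zero_hilb]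
    rw [h0, ← claimA I Θ hI hΘ1 r hA d le_rfl j hj, ← fdZ_stepPiece I Θ d (j : ℤ)]
  · set g : ℕ → ℤ := fun m => fdZ I Θ 0 (m : ℤ) with hg
    have h0 : hQ K I d (r+1) = ∑ i ∈ Finset.range (r+1+1), (-1:ℤ)^i * (d.choose i : ℤ)
        * g (r+1-i) := by
      rw [hQ]
      refine Finset.sum_congr rfl fun i _ => ?_
      show _ = (-1:ℤ)^i * (d.choose i : ℤ) * fdZ I Θ 0 ((r+1-i : ℕ) : ℤ)
      rw [fdZ_zero_hilb]
    rw [h0, final_binom g d r]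
    have hin : ∀ k ∈ Finset.range d, ∑ i ∈ Finset.range (r+1),
        (-1:ℤ)^i * (k.choose i : ℤ) * g (r-i) = fdZ I Θ k (r : ℤ) :=
      fun k hk => (claimA I Θ hI hΘ1 r hA k (le_of_lt (Finset.mem_range.mp hk)) r le_rfl).symm
    rw [Finset.sum_congr rfl hin]
    have hB := claimB I Θ hI hΘ1 r d le_rfl
    have hsum : ∑ k : Fin d, (Module.finrank K (aPiece K (M := MvPolynomial (Fin n) K ⧸ I)
        (fun j' => quotDeg K I j') Θ k (r : ℤ)) : ℤ)
          = ∑ k ∈ Finset.range d, aPk I Θ (r : ℤ) k := by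
      rw [← Fin.sum_univ_eq_sum_range]
      refine Finset.sum_congr rfl fun k _ => ?_
      rw [aPk, dif_pos k.isLt, Fin.eta]
    have hstep := fdZ_stepPiece I Θ d ((r : ℤ) + 1)
    have hg1 : g (r+1) = fdZ I Θ 0 ((r:ℤ)+1) := by
      have hc : ((r+1 : ℕ) : ℤ) = (r:ℤ)+1 := by push_cast; ring
      show fdZ I Θ 0 ((r+1 : ℕ) : ℤ) = fdZ I Θ 0 ((r:ℤ)+1)
      rw [hc]
    rw [hstep, hsum, hB, hg1, Finset.sum_sub_distrib]
    ring

end SerrePaper
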